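/- For every natural number m, sum_{k=0}^m (3k)!/(k!^3) * 3^(-3k)/(k+1) = binom(m+2,2) * binom(3m+4, m+1) * binom(2m+3, m+1) * 3^(-3m-1) / (3m+4), as rational numbers. -/

import Mathlib

lemma rhs_simp (m : ℕ) :
    (Nat.choose (m + 2) 2 : ℚ) * (Nat.choose (3 * m + 4) (m + 1) : ℚ) *
        (Nat.choose (2 * m + 3) (m + 1) : ℚ) / (3 : ℚ) ^ (3 * m + 1) / (3 * m + 4) =
      ((3 * m + 3).factorial : ℚ) * (m + 1) /
        (((m + 1).factorial : ℚ) ^ 3 * 2 * (3 : ℚ) ^ (3 * m + 1)) := by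
  have h1 := Nat.choose_mul_factorial_mul_factorial (show m + 1 ≤ 3 * m + 4 by omega)
  have h2 := Nat.choose_mul_factorial_mul_factorial (show m + 1 ≤ 2 * m + 3 by omega)
  have h3 := Nat.choose_mul_factorial_mul_factorial (show 2 ≤ m + 2 by omega)
  have e1 : 3 * m + 4 - (m + 1) = 2 * m + 3 := by omega
  have e2 : 2 * m + 3 - (m + 1) = m + 2 := by omega
  have e3 : m + 2 - 2 = m := by omega
  rw [e1] at h1; rw [e2] at h2; rw [e3] at h3
  have nf : ∀ n : ℕ, (n.factorial : ℚ) ≠ 0 := fun n => by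
    exact_mod_cast Nat.factorial_ne_zero n
  have q1 : ((3 * m + 4).choose (m + 1) : ℚ)
      = ((3 * m + 4).factorial : ℚ) / ((m + 1).factorial * (2 * m + 3).factorial) := by
    rw [eq_div_iff (by exact mul_ne_zero (nf _) (nf _)), ← mul_assoc]
    exact_mod_cast congrArg (Nat.cast : ℕ → ℚ) h1
  have q2 : ((2 * m + 3).choose (m + 1) : ℚ)
      = ((2 * m + 3).factorial : ℚ) / ((m + 1).factorial * (m + 2).factorial) := by
    rw [eq_div_iff (by exact mul_ne_zero (nf _) (nf _)), ← mul_assoc]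
    exact_mod_cast congrArg (Nat.cast : ℕ → ℚ) h2
  have q3 : ((m + 2).choose 2 : ℚ) = ((m + 2).factorial : ℚ) / (2 * m.factorial) := by
    rw [eq_div_iff (by exact mul_ne_zero two_ne_zero (nf _))]
    have := congrArg (Nat.cast : ℕ → ℚ) h3
    push_cast [Nat.factorial] at this ⊢
    linarith
  have f1 : ((3 * m + 4).factorial : ℚ) = (3 * m + 4) * (3 * m + 3).factorial := by
    have : 3 * m + 4 = (3 * m + 3) + 1 := by omega
    rw [this, Nat.factorial_succ]; push_cast; ring
  have f2 : ((m + 2).factorial : ℚ) = (m + 2) * (m + 1).factorial := by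
    have : m + 2 = (m + 1) + 1 := by omega
    rw [this, Nat.factorial_succ]; push_cast; ring
  have f3 : ((m + 1).factorial : ℚ) = (m + 1) * m.factorial := by
    rw [Nat.factorial_succ]; push_cast; ring
  rw [q1, q2, q3, f1, f2, f3]
  have p3 : (3 : ℚ) ^ (3 * m + 1) ≠ 0 := by positivity
  have hm1 : ((m : ℚ) + 1) ≠ 0 := by positivity
  have hm2 : ((m : ℚ) + 2) ≠ 0 := by positivity
  have hm4 : (3 * (m : ℚ) + 4) ≠ 0 := by positivity
  field_simp

/-- Closed form: ∑_{k=0}^m (3k)!/(k!^3) 3^(-3k)/(k+1)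
  = C(m+2,2) C(3m+4,m+1) C(2m+3,m+1) 3^(-3m-1)/(3m+4). -/
theorem sum_f_closed_binom (m : ℕ) :
    ∑ k ∈ Finset.range (m + 1),
        ((3 * k).factorial : ℚ) / ((k.factorial : ℚ) ^ 3) / (3 : ℚ) ^ (3 * k) / (k + 1) =
      (Nat.choose (m + 2) 2 : ℚ) * (Nat.choose (3 * m + 4) (m + 1) : ℚ) *
        (Nat.choose (2 * m + 3) (m + 1) : ℚ) / (3 : ℚ) ^ (3 * m + 1) / (3 * m + 4) := by
  induction m with
  | zero => norm_num [Nat.factorial]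
  | succ m ih =>
    rw [Finset.sum_range_succ, ih, rhs_simp m, rhs_simp (m + 1)]
    rw [show 3 * (m + 1) = 3 * m + 3 from by ring]
    rw [show 3 * m + 3 + 3 = 3 * m + 6 from by ring, show m + 1 + 1 = m + 2 from by ring]
    have nf : ∀ n : ℕ, (n.factorial : ℚ) ≠ 0 := fun n => by
      exact_mod_cast Nat.factorial_ne_zero n
    have g2 : ((3 * m + 6).factorial : ℚ)
        = (3 * m + 6) * ((3 * m + 5) * ((3 * m + 4) * (3 * m + 3).factorial)) := by
      rw [show 3 * m + 6 = (3 * m + 5) + 1 from by ring, Nat.factorial_succ,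
        show 3 * m + 5 = (3 * m + 4) + 1 from by ring, Nat.factorial_succ,
        show 3 * m + 4 = (3 * m + 3) + 1 from by ring, Nat.factorial_succ]
      push_cast; ring
    have g3 : ((m + 2).factorial : ℚ) = (m + 2) * (m + 1).factorial := by
      rw [show m + 2 = (m + 1) + 1 from by ring, Nat.factorial_succ]; push_cast; ring
    have p1 : (3 : ℚ) ^ (3 * m + 1) = 3 * 3 ^ (3 * m) := by
      rw [pow_succ]; ring
    have p2 : (3 : ℚ) ^ (3 * m + 3) = 27 * 3 ^ (3 * m) := by
      rw [show 3 * m + 3 = 3 * m + 3 from rfl, pow_add]; ring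
    have p3 : (3 : ℚ) ^ (3 * m + 3 + 1) = 81 * 3 ^ (3 * m) := by
      rw [pow_add, pow_add]; ring
    rw [g2, g3, p1, p2, p3]
    have hP : (3 : ℚ) ^ (3 * m) ≠ 0 := by positivity
    have hm2 : ((m : ℚ) + 1 + 1) ≠ 0 := by positivity
    field_simp
    push_cast
    ring
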